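/- Let M be an m×n complex matrix with singular value decomposition M = Σ_{j=1}^{min(m,n)} σ_j(M) u_j v_jᴴ, where σ_1(M) ≥ σ_2(M) ≥ … ≥ 0 and (u_j), (v_j) are orthonormal families in ℂ^m and ℂ^n, and let ρ be an integer with 1 ≤ ρ < min(m,n). Then the ρ-truncation M_ρ = Σ_{j=1}^{ρ} σ_j(M) u_j v_jᴴ satisfies ‖M − M_ρ‖_F² = Σ_{j=ρ+1}^{min(m,n)} σ_j(M)², and for every m×n complex matrix N of rank at most ρ one has ‖M − N‖_F² ≥ Σ_{j=ρ+1}^{min(m,n)} σ_j(M)²; that is, M_ρ is a closest rank-ρ approximation of M in the Frobenius norm. -/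

import Mathlib

open Finset Complex

local notation "conj'" => starRingEnd ℂ

lemma expandC {α ι : Type*} [Fintype α] [Fintype ι] [DecidableEq ι] (w : ι → α → ℂ)
    (hw : ∀ s s', ∑ i, conj' (w s i) * w s' i = if s = s' then 1 else 0)
    (x : α → ℂ) (c : ι → ℂ) :
    ∑ i, conj' (x i - ∑ s, c s * w s i) * (x i - ∑ s, c s * w s i)
      = ∑ i, conj' (x i) * x i
        - ∑ s, conj' (∑ i, conj' (w s i) * x i) * (∑ i, conj' (w s i) * x i)
        + ∑ s, conj' (c s - ∑ i, conj' (w s i) * x i) * (c s - ∑ i, conj' (w s i) * x i) := by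
  set a : ι → ℂ := fun s => ∑ i, conj' (w s i) * x i with ha_def
  have hconj : ∀ s, conj' (a s) = ∑ i, conj' (x i) * w s i := by
    intro s
    rw [ha_def, map_sum]
    refine Finset.sum_congr rfl fun i _ => ?_
    rw [map_mul, Complex.conj_conj]; ring
  have h1 : ∑ i, conj' (x i) * (∑ s, c s * w s i) = ∑ s, c s * conj' (a s) := by
    simp only [Finset.mul_sum]
    rw [Finset.sum_comm]
    refine Finset.sum_congr rfl fun s _ => ?_
    rw [hconj, Finset.mul_sum]
    exact Finset.sum_congr rfl fun i _ => by ring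
  have h2 : ∑ i, conj' (∑ s, c s * w s i) * x i = ∑ s, conj' (c s) * a s := by
    simp only [map_sum, map_mul, Finset.sum_mul]
    rw [Finset.sum_comm]
    refine Finset.sum_congr rfl fun s _ => ?_
    simp only [ha_def, Finset.mul_sum]
    exact Finset.sum_congr rfl fun i _ => by ring
  have h3 : ∑ i, conj' (∑ s, c s * w s i) * (∑ s, c s * w s i) = ∑ s, conj' (c s) * c s := by
    calc ∑ i, conj' (∑ s, c s * w s i) * (∑ s, c s * w s i)
        = ∑ i, ∑ s, ∑ s', (conj' (c s) * c s') * (conj' (w s i) * w s' i) := by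
          refine Finset.sum_congr rfl fun i _ => ?_
          rw [map_sum, Finset.sum_mul]
          refine Finset.sum_congr rfl fun s _ => ?_
          rw [Finset.mul_sum]
          exact Finset.sum_congr rfl fun s' _ => by rw [map_mul]; ring
      _ = ∑ s, ∑ s', (conj' (c s) * c s') * ∑ i, (conj' (w s i) * w s' i) := by
          rw [Finset.sum_comm]
          refine Finset.sum_congr rfl fun s _ => ?_
          rw [Finset.sum_comm]
          exact Finset.sum_congr rfl fun s' _ => (Finset.mul_sum _ _ _).symm
      _ = ∑ s, conj' (c s) * c s := by
          refine Finset.sum_congr rfl fun s _ => ?_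
          simp only [hw]
          simp
  have lhs : ∑ i, conj' (x i - ∑ s, c s * w s i) * (x i - ∑ s, c s * w s i)
      = ∑ i, conj' (x i) * x i - ∑ s, c s * conj' (a s) - ∑ s, conj' (c s) * a s
        + ∑ s, conj' (c s) * c s := by
    have hpt : ∀ i, conj' (x i - ∑ s, c s * w s i) * (x i - ∑ s, c s * w s i)
        = conj' (x i) * x i - conj' (x i) * (∑ s, c s * w s i)
          - (conj' (∑ s, c s * w s i)) * x i
          + conj' (∑ s, c s * w s i) * (∑ s, c s * w s i) := by
      intro i; rw [map_sub]; ring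
    rw [Finset.sum_congr rfl fun i _ => hpt i, Finset.sum_add_distrib,
      Finset.sum_sub_distrib, Finset.sum_sub_distrib, h1, h2, h3]
  have h4 : ∑ s, conj' (c s - a s) * (c s - a s)
      = ∑ s, conj' (c s) * c s - ∑ s, conj' (c s) * a s - ∑ s, c s * conj' (a s)
        + ∑ s, conj' (a s) * a s := by
    have hpt : ∀ s, conj' (c s - a s) * (c s - a s)
        = conj' (c s) * c s - conj' (c s) * a s - c s * conj' (a s) + conj' (a s) * a s := by
      intro s; rw [map_sub]; ring
    rw [Finset.sum_congr rfl fun s _ => hpt s, Finset.sum_add_distrib,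
      Finset.sum_sub_distrib, Finset.sum_sub_distrib]
  rw [lhs, h4]; ring

lemma expandR {α ι : Type*} [Fintype α] [Fintype ι] [DecidableEq ι] (w : ι → α → ℂ)
    (hw : ∀ s s', ∑ i, conj' (w s i) * w s' i = if s = s' then 1 else 0)
    (x : α → ℂ) (c : ι → ℂ) :
    ∑ i, normSq (x i - ∑ s, c s * w s i)
      = ∑ i, normSq (x i) - ∑ s, normSq (∑ i, conj' (w s i) * x i)
        + ∑ s, normSq (c s - ∑ i, conj' (w s i) * x i) := by
  have key := expandC w hw x c
  simp only [← Complex.normSq_eq_conj_mul_self] at key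
  exact_mod_cast key

lemma besselR {α ι : Type*} [Fintype α] [Fintype ι] [DecidableEq ι] (w : ι → α → ℂ)
    (hw : ∀ s s', ∑ i, conj' (w s i) * w s' i = if s = s' then 1 else 0)
    (x : α → ℂ) :
    ∑ s, normSq (∑ i, conj' (w s i) * x i) ≤ ∑ i, normSq (x i) := by
  have key := expandR w hw x (fun s => ∑ i, conj' (w s i) * x i)
  simp only [sub_self, Complex.normSq_zero, Finset.sum_const_zero, add_zero] at key
  have h0 : (0:ℝ) ≤ ∑ i, normSq (x i - ∑ s, (∑ i', conj' (w s i') * x i') * w s i) :=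
    Finset.sum_nonneg fun i _ => Complex.normSq_nonneg _
  linarith
lemma lowerR {α ι : Type*} [Fintype α] [Fintype ι] [DecidableEq ι] (w : ι → α → ℂ)
    (hw : ∀ s s', ∑ i, conj' (w s i) * w s' i = if s = s' then 1 else 0)
    (x : α → ℂ) (c : ι → ℂ) :
    ∑ i, normSq (x i) - ∑ s, normSq (∑ i, conj' (w s i) * x i)
      ≤ ∑ i, normSq (x i - ∑ s, c s * w s i) := by
  rw [expandR w hw x c]
  have h0 : (0:ℝ) ≤ ∑ s, normSq (c s - ∑ i, conj' (w s i) * x i) :=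
    Finset.sum_nonneg fun s _ => Complex.normSq_nonneg _
  linarith

lemma frobRankOne {K : ℕ} {αm αn : Type*} [Fintype αm] [Fintype αn]
    (S : Finset (Fin K)) (σ : Fin K → ℝ) (u : Fin K → αm → ℂ) (v : Fin K → αn → ℂ)
    (hu : ∀ j j', ∑ i, conj' (u j i) * u j' i = if j = j' then 1 else 0)
    (hv : ∀ j j', ∑ k, conj' (v j k) * v j' k = if j = j' then 1 else 0) :
    ∑ i, ∑ k, normSq (∑ j ∈ S, (σ j : ℂ) * u j i * conj' (v j k)) = ∑ j ∈ S, σ j ^ 2 := by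
  have key : ∑ i, ∑ k, conj' (∑ j ∈ S, (σ j : ℂ) * u j i * conj' (v j k))
        * (∑ j ∈ S, (σ j : ℂ) * u j i * conj' (v j k))
      = ∑ j ∈ S, ((σ j : ℂ)) ^ 2 := by
    calc ∑ i, ∑ k, conj' (∑ j ∈ S, (σ j : ℂ) * u j i * conj' (v j k))
          * (∑ j ∈ S, (σ j : ℂ) * u j i * conj' (v j k))
        = ∑ j ∈ S, ∑ j' ∈ S, ((σ j : ℂ) * (σ j' : ℂ))
            * ((∑ i, conj' (u j i) * u j' i) * (∑ k, v j k * conj' (v j' k))) := by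
          have step : ∀ i k, conj' (∑ j ∈ S, (σ j : ℂ) * u j i * conj' (v j k))
              * (∑ j ∈ S, (σ j : ℂ) * u j i * conj' (v j k))
              = ∑ j ∈ S, ∑ j' ∈ S, ((σ j : ℂ) * (σ j' : ℂ))
                  * ((conj' (u j i) * u j' i) * (v j k * conj' (v j' k))) := by
            intro i k
            rw [map_sum, Finset.sum_mul]
            refine Finset.sum_congr rfl fun j _ => ?_
            rw [Finset.mul_sum]
            refine Finset.sum_congr rfl fun j' _ => ?_
            simp only [map_mul, Complex.conj_conj, Complex.conj_ofReal]
            ring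
          simp only [step]
          have s1 : ∀ i : αm, (∑ k, ∑ j ∈ S, ∑ j' ∈ S, ((σ j : ℂ) * (σ j' : ℂ))
              * ((conj' (u j i) * u j' i) * (v j k * conj' (v j' k))))
              = ∑ j ∈ S, ∑ j' ∈ S, ∑ k, ((σ j : ℂ) * (σ j' : ℂ))
              * ((conj' (u j i) * u j' i) * (v j k * conj' (v j' k))) := by
            intro i
            rw [Finset.sum_comm]
            exact Finset.sum_congr rfl fun j _ => Finset.sum_comm
          simp only [s1]
          rw [Finset.sum_comm]
          refine Finset.sum_congr rfl fun j _ => ?_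
          rw [Finset.sum_comm]
          refine Finset.sum_congr rfl fun j' _ => ?_
          rw [Finset.sum_mul_sum, Finset.mul_sum]
          refine Finset.sum_congr rfl fun i _ => ?_
          rw [Finset.mul_sum]
      _ = ∑ j ∈ S, ((σ j : ℂ)) ^ 2 := by
          have hv' : ∀ j j', ∑ k, v j k * conj' (v j' k) = if j = j' then 1 else 0 := by
            intro j j'
            have h : (∑ k, v j k * conj' (v j' k)) = conj' (∑ k, conj' (v j k) * v j' k) := by
              rw [map_sum]
              exact Finset.sum_congr rfl fun k _ => by
                rw [map_mul, Complex.conj_conj]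
            rw [h, hv]
            split <;> simp
          refine Finset.sum_congr rfl fun j hj => ?_
          rw [Finset.sum_eq_single_of_mem j hj]
          · rw [hu, hv']; simp; ring
          · intro j' _ hne
            rw [hu, hv']
            simp [Ne.symm hne]
  simp only [← Complex.normSq_eq_conj_mul_self] at key
  exact_mod_cast key

lemma card_filter_lt (K ρ : ℕ) (h : ρ ≤ K) :
    (Finset.univ.filter (fun j : Fin K => (j : ℕ) < ρ)).card = ρ := by
  have : (Finset.univ.filter (fun j : Fin K => (j : ℕ) < ρ))
      = Finset.map (Fin.castLEEmb h) Finset.univ := by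
    ext x
    simp only [Finset.mem_filter, Finset.mem_map, Finset.mem_univ, true_and]
    constructor
    · intro hx
      exact ⟨⟨(x : ℕ), hx⟩, by simp [Fin.castLEEmb, Fin.ext_iff]⟩
    · rintro ⟨y, hy⟩
      rw [← hy]
      simpa [Fin.castLEEmb] using y.isLt
  rw [this, Finset.card_map, Finset.card_univ, Fintype.card_fin]

lemma rearr {K ρ : ℕ} (hρK : ρ < K) (c t : Fin K → ℝ)
    (hmono : ∀ i j : Fin K, i ≤ j → c j ≤ c i) (hc0 : ∀ j, 0 ≤ c j)
    (ht0 : ∀ j, 0 ≤ t j) (ht1 : ∀ j, t j ≤ 1) (hts : ∑ j, t j ≤ (ρ : ℝ)) :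
    ∑ j ∈ Finset.univ.filter (fun j : Fin K => ρ ≤ (j : ℕ)), c j
      ≤ ∑ j, c j * (1 - t j) := by
  set p : ℝ := c ⟨ρ, hρK⟩ with hp
  have hfn : Finset.univ.filter (fun j : Fin K => ¬ (j : ℕ) < ρ)
      = Finset.univ.filter (fun j : Fin K => ρ ≤ (j : ℕ)) := by
    apply Finset.filter_congr; intro j _; simp [not_lt]
  have hsplit : ∀ f : Fin K → ℝ, ∑ j, f j
      = ∑ j ∈ Finset.univ.filter (fun j : Fin K => (j : ℕ) < ρ), f j
        + ∑ j ∈ Finset.univ.filter (fun j : Fin K => ρ ≤ (j : ℕ)), f j := by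
    intro f
    rw [← hfn, Finset.sum_filter_add_sum_filter_not]
  have h1 : ∑ j ∈ Finset.univ.filter (fun j : Fin K => ρ ≤ (j : ℕ)), c j * t j
      ≤ p * ∑ j ∈ Finset.univ.filter (fun j : Fin K => ρ ≤ (j : ℕ)), t j := by
    rw [Finset.mul_sum]
    refine Finset.sum_le_sum fun j hj => ?_
    have hj' : ρ ≤ (j : ℕ) := (Finset.mem_filter.mp hj).2
    exact mul_le_mul_of_nonneg_right (hmono _ _ (by simp [Fin.le_def, hj'])) (ht0 j)
  have h2 : p * ∑ j ∈ Finset.univ.filter (fun j : Fin K => (j : ℕ) < ρ), (1 - t j)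
      ≤ ∑ j ∈ Finset.univ.filter (fun j : Fin K => (j : ℕ) < ρ), c j * (1 - t j) := by
    rw [Finset.mul_sum]
    refine Finset.sum_le_sum fun j hj => ?_
    have hj' : (j : ℕ) < ρ := (Finset.mem_filter.mp hj).2
    exact mul_le_mul_of_nonneg_right (hmono _ _ (by simp [Fin.le_def, hj'.le])) (by linarith [ht1 j])
  have hcard : ∑ j ∈ Finset.univ.filter (fun j : Fin K => (j : ℕ) < ρ), (1 - t j)
      = (ρ : ℝ) - ∑ j ∈ Finset.univ.filter (fun j : Fin K => (j : ℕ) < ρ), t j := by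
    rw [Finset.sum_sub_distrib, Finset.sum_const, card_filter_lt K ρ hρK.le]
    simp
  have hts' : ∑ j ∈ Finset.univ.filter (fun j : Fin K => ρ ≤ (j : ℕ)), t j
      ≤ (ρ : ℝ) - ∑ j ∈ Finset.univ.filter (fun j : Fin K => (j : ℕ) < ρ), t j := by
    have := hsplit t
    linarith
  have hp0 : 0 ≤ p := hc0 _
  have key : ∑ j ∈ Finset.univ.filter (fun j : Fin K => ρ ≤ (j : ℕ)), c j * t j
      ≤ ∑ j ∈ Finset.univ.filter (fun j : Fin K => (j : ℕ) < ρ), c j * (1 - t j) := by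
    calc ∑ j ∈ Finset.univ.filter (fun j : Fin K => ρ ≤ (j : ℕ)), c j * t j
        ≤ p * ∑ j ∈ Finset.univ.filter (fun j : Fin K => ρ ≤ (j : ℕ)), t j := h1
      _ ≤ p * ((ρ : ℝ) - ∑ j ∈ Finset.univ.filter (fun j : Fin K => (j : ℕ) < ρ), t j) :=
          mul_le_mul_of_nonneg_left hts' hp0
      _ = p * ∑ j ∈ Finset.univ.filter (fun j : Fin K => (j : ℕ) < ρ), (1 - t j) := by
          rw [hcard]
      _ ≤ _ := h2
  have e1 := hsplit (fun j => c j * (1 - t j))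
  have e2 : ∀ j ∈ Finset.univ.filter (fun j : Fin K => ρ ≤ (j : ℕ)),
      c j * (1 - t j) = c j - c j * t j := fun j _ => by ring
  rw [e1, Finset.sum_congr rfl e2, Finset.sum_sub_distrib]
  linarith


/-- The Frobenius norm of a complex matrix. -/
noncomputable def frobNorm {α β : Type*} [Fintype α] [Fintype β] (A : Matrix α β ℂ) : ℝ :=
  Real.sqrt (∑ i, ∑ j, ‖A i j‖ ^ 2)

lemma frob_sq {α β : Type*} [Fintype α] [Fintype β] (A : Matrix α β ℂ) :
    frobNorm A ^ 2 = ∑ i, ∑ j, Complex.normSq (A i j) := by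
  rw [frobNorm, Real.sq_sqrt (by positivity)]
  exact Finset.sum_congr rfl fun i _ => Finset.sum_congr rfl fun j _ => by
    rw [Complex.sq_norm]

theorem truncated_svd_is_best_frobenius_approx {m n ρ : ℕ} (hρ1 : 1 ≤ ρ) (hρ : ρ < min m n)
    (M : Matrix (Fin m) (Fin n) ℂ)
    (σ : Fin (min m n) → ℝ)
    (u : Fin (min m n) → Fin m → ℂ) (v : Fin (min m n) → Fin n → ℂ)
    (hmono : ∀ i j : Fin (min m n), i ≤ j → σ j ≤ σ i)
    (hnonneg : ∀ j, 0 ≤ σ j)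
    (hu : ∀ j j' : Fin (min m n),
      ∑ i, (starRingEnd ℂ) (u j i) * u j' i = if j = j' then 1 else 0)
    (hv : ∀ j j' : Fin (min m n),
      ∑ k, (starRingEnd ℂ) (v j k) * v j' k = if j = j' then 1 else 0)
    (hM : M = ∑ j : Fin (min m n),
      Matrix.of fun i k => (σ j : ℂ) * u j i * (starRingEnd ℂ) (v j k))
    (Mρ : Matrix (Fin m) (Fin n) ℂ)
    (hMρ : Mρ = ∑ j ∈ Finset.univ.filter (fun j : Fin (min m n) => (j : ℕ) < ρ),
      Matrix.of fun i k => (σ j : ℂ) * u j i * (starRingEnd ℂ) (v j k)) :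
    frobNorm (M - Mρ) ^ 2
        = ∑ j ∈ Finset.univ.filter (fun j : Fin (min m n) => ρ ≤ (j : ℕ)), σ j ^ 2 ∧
      ∀ N : Matrix (Fin m) (Fin n) ℂ, N.rank ≤ ρ →
        (∑ j ∈ Finset.univ.filter (fun j : Fin (min m n) => ρ ≤ (j : ℕ)), σ j ^ 2)
          ≤ frobNorm (M - N) ^ 2 := by
  -- Part 1
  have hfnGE : Finset.univ.filter (fun j : Fin (min m n) => ¬ (j : ℕ) < ρ)
      = Finset.univ.filter (fun j : Fin (min m n) => ρ ≤ (j : ℕ)) := by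
    apply Finset.filter_congr; intro j _; simp [not_lt]
  have hdiffM : M - Mρ = ∑ j ∈ Finset.univ.filter (fun j : Fin (min m n) => ρ ≤ (j : ℕ)),
      Matrix.of fun i k => (σ j : ℂ) * u j i * (starRingEnd ℂ) (v j k) := by
    have hsplit := Finset.sum_filter_add_sum_filter_not Finset.univ
      (fun j : Fin (min m n) => (j : ℕ) < ρ)
      (fun j => Matrix.of fun i k => (σ j : ℂ) * u j i * (starRingEnd ℂ) (v j k))
    rw [hM, hMρ, ← hsplit, ← hfnGE, add_sub_cancel_left]
  have hdiff : ∀ i k, (M - Mρ) i k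
      = ∑ j ∈ Finset.univ.filter (fun j : Fin (min m n) => ρ ≤ (j : ℕ)),
          (σ j : ℂ) * u j i * (starRingEnd ℂ) (v j k) := by
    intro i k
    rw [hdiffM]
    simp [Matrix.sum_apply]
  have part1 : frobNorm (M - Mρ) ^ 2
      = ∑ j ∈ Finset.univ.filter (fun j : Fin (min m n) => ρ ≤ (j : ℕ)), σ j ^ 2 := by
    rw [frob_sq]
    simp only [hdiff]
    exact frobRankOne _ σ u v hu hv
  refine ⟨part1, ?_⟩
  -- Part 2
  intro N hrank
  -- the column space of `N` inside Euclidean space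
  set e : (Fin m → ℂ) ≃ₗ[ℂ] EuclideanSpace ℂ (Fin m) :=
    (WithLp.linearEquiv 2 ℂ (Fin m → ℂ)).symm with he
  set W : Submodule ℂ (EuclideanSpace ℂ (Fin m)) :=
    Submodule.map (e : (Fin m → ℂ) →ₗ[ℂ] EuclideanSpace ℂ (Fin m))
      (LinearMap.range N.mulVecLin) with hW
  have hr : Module.finrank ℂ W ≤ ρ := by
    have h1 : Module.finrank ℂ W = N.rank := by
      rw [hW, LinearEquiv.finrank_map_eq]
      rfl
    omega
  set r : ℕ := Module.finrank ℂ W with hr_def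
  set b : OrthonormalBasis (Fin r) ℂ W := stdOrthonormalBasis ℂ W with hb
  set w : Fin r → Fin m → ℂ := fun s i => ((b s : EuclideanSpace ℂ (Fin m)) i) with hw_def
  have hw : ∀ s s', ∑ i, (starRingEnd ℂ) (w s i) * w s' i = if s = s' then 1 else 0 := by
    intro s s'
    have h := (orthonormal_iff_ite.mp b.orthonormal) s s'
    rw [Submodule.coe_inner, PiLp.inner_apply] at h
    simpa [RCLike.inner_apply, hw_def, mul_comm] using h
  -- coefficients of `N.mulVec (v j)` in the orthonormal basis of `W`
  have hmem : ∀ j, e (N.mulVec (v j)) ∈ W :=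
    fun j => Submodule.mem_map_of_mem (LinearMap.mem_range_self _ (v j))
  set c : Fin (min m n) → Fin r → ℂ := fun j s => b.repr ⟨e (N.mulVec (v j)), hmem j⟩ s
    with hc
  have hcoef : ∀ j i, N.mulVec (v j) i = ∑ s, c j s * w s i := by
    intro j i
    have h := b.sum_repr ⟨e (N.mulVec (v j)), hmem j⟩
    set f : W →ₗ[ℂ] (Fin m → ℂ) :=
      (WithLp.linearEquiv 2 ℂ (Fin m → ℂ)).toLinearMap.comp W.subtype with hf
    have h4 : N.mulVec (v j) = f ⟨e (N.mulVec (v j)), hmem j⟩ := rfl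
    rw [h4, ← h, map_sum, Finset.sum_apply]
    refine Finset.sum_congr rfl fun s _ => ?_
    rw [map_smul]
    rfl
  -- M.mulVec (v j) = σ j • u j
  have hMv : ∀ j i, M.mulVec (v j) i = (σ j : ℂ) * u j i := by
    intro j i
    rw [hM]
    simp only [Matrix.mulVec, dotProduct, Matrix.sum_apply, Matrix.of_apply,
      Finset.sum_apply]
    calc ∑ k, (∑ j', (σ j' : ℂ) * u j' i * (starRingEnd ℂ) (v j' k)) * v j k
        = ∑ j', ((σ j' : ℂ) * u j' i) * ∑ k, (starRingEnd ℂ) (v j' k) * v j k := by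
          simp only [Finset.sum_mul]
          rw [Finset.sum_comm]
          refine Finset.sum_congr rfl fun j' _ => ?_
          rw [Finset.mul_sum]
          exact Finset.sum_congr rfl fun k _ => by ring
      _ = (σ j : ℂ) * u j i := by
          simp only [hv]
          simp
  -- the Bessel-type coefficients
  set g : Fin (min m n) → Fin r → ℝ :=
    fun j s => Complex.normSq (∑ i, (starRingEnd ℂ) (w s i) * u j i) with hg
  set t : Fin (min m n) → ℝ := fun j => ∑ s, g j s with ht
  have hu1 : ∀ j, ∑ i, Complex.normSq (u j i) = 1 := by
    intro j
    have h := hu j j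
    simp only [← Complex.normSq_eq_conj_mul_self] at h
    simp at h
    exact_mod_cast h
  have hw1 : ∀ s, ∑ i, Complex.normSq (w s i) = 1 := by
    intro s
    have h := hw s s
    simp only [← Complex.normSq_eq_conj_mul_self] at h
    simp at h
    exact_mod_cast h
  have ht0 : ∀ j, 0 ≤ t j := fun j => Finset.sum_nonneg fun s _ => Complex.normSq_nonneg _
  have ht1 : ∀ j, t j ≤ 1 := by
    intro j
    have h := besselR w hw (u j)
    rw [hu1 j] at h
    exact h
  have hts : ∑ j, t j ≤ (ρ : ℝ) := by
    have hswap : ∑ j, t j = ∑ s, ∑ j, g j s := by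
      simp only [ht]; exact Finset.sum_comm
    have hper : ∀ s, ∑ j, g j s ≤ 1 := by
      intro s
      have h := besselR u hu (w s)
      rw [hw1 s] at h
      refine le_trans (le_of_eq ?_) h
      refine Finset.sum_congr rfl fun j _ => ?_
      simp only [hg]
      have : (∑ i, (starRingEnd ℂ) (w s i) * u j i)
          = (starRingEnd ℂ) (∑ i, (starRingEnd ℂ) (u j i) * w s i) := by
        rw [map_sum]
        exact Finset.sum_congr rfl fun i _ => by rw [map_mul, Complex.conj_conj]; ring
      rw [this, Complex.normSq_conj]
    calc ∑ j, t j = ∑ s : Fin r, ∑ j, g j s := hswap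
      _ ≤ ∑ s : Fin r, (1:ℝ) := Finset.sum_le_sum fun s _ => hper s
      _ = (r : ℝ) := by simp
      _ ≤ (ρ : ℝ) := by exact_mod_cast hr
  -- row-wise Bessel: partial isometry lower bound
  have st1 : ∑ j, ∑ i, Complex.normSq ((M.mulVec (v j) - N.mulVec (v j)) i)
      ≤ frobNorm (M - N) ^ 2 := by
    rw [frob_sq]
    rw [Finset.sum_comm]
    refine Finset.sum_le_sum fun i _ => ?_
    have h := besselR v hv (fun k => (starRingEnd ℂ) ((M - N) i k))
    refine le_trans (le_of_eq ?_) (le_trans h (le_of_eq ?_))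
    · refine Finset.sum_congr rfl fun j _ => ?_
      have h1 : (M.mulVec (v j) - N.mulVec (v j)) i = ∑ k, (M - N) i k * v j k := by
        rw [← Matrix.sub_mulVec]
        rfl
      have h2 : (∑ k, (starRingEnd ℂ) (v j k) * (starRingEnd ℂ) ((M - N) i k))
          = (starRingEnd ℂ) (∑ k, (M - N) i k * v j k) := by
        rw [map_sum]
        exact Finset.sum_congr rfl fun k _ => by rw [map_mul]; ring
      rw [h1, h2, Complex.normSq_conj]
    · exact Finset.sum_congr rfl fun k _ => Complex.normSq_conj _
  -- per-column lower bound
  have st2 : ∀ j, σ j ^ 2 * (1 - t j)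
      ≤ ∑ i, Complex.normSq ((M.mulVec (v j) - N.mulVec (v j)) i) := by
    intro j
    have hx : ∀ i, (M.mulVec (v j) - N.mulVec (v j)) i
        = ((σ j : ℂ) * u j i) - ∑ s, c j s * w s i := by
      intro i
      have : (M.mulVec (v j) - N.mulVec (v j)) i = M.mulVec (v j) i - N.mulVec (v j) i := rfl
      rw [this, hMv j i, hcoef j i]
    have h := lowerR w hw (fun i => (σ j : ℂ) * u j i) (c j)
    have hxs : ∑ i, Complex.normSq ((σ j : ℂ) * u j i) = σ j ^ 2 := by
      simp only [Complex.normSq_mul, Complex.normSq_ofReal]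
      rw [← Finset.mul_sum, hu1 j]
      ring
    have has : ∀ s, Complex.normSq (∑ i, (starRingEnd ℂ) (w s i) * ((σ j : ℂ) * u j i))
        = σ j ^ 2 * g j s := by
      intro s
      have : (∑ i, (starRingEnd ℂ) (w s i) * ((σ j : ℂ) * u j i))
          = (σ j : ℂ) * ∑ i, (starRingEnd ℂ) (w s i) * u j i := by
        rw [Finset.mul_sum]
        exact Finset.sum_congr rfl fun i _ => by ring
      rw [this, Complex.normSq_mul, Complex.normSq_ofReal]
      simp only [hg]
      ring
    rw [hxs] at h
    simp only [has] at h
    rw [← Finset.mul_sum] at h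
    calc σ j ^ 2 * (1 - t j) = σ j ^ 2 - σ j ^ 2 * t j := by ring
      _ ≤ ∑ i, Complex.normSq (((σ j : ℂ) * u j i) - ∑ s, c j s * w s i) := h
      _ = ∑ i, Complex.normSq ((M.mulVec (v j) - N.mulVec (v j)) i) := by
          exact Finset.sum_congr rfl fun i _ => by rw [hx i]
  -- combine
  have hrearr := rearr hρ (fun j => σ j ^ 2) t
    (fun i j hij => by
      have := hmono i j hij
      exact pow_le_pow_left₀ (hnonneg j) this 2)
    (fun j => sq_nonneg _) ht0 ht1 hts
  calc ∑ j ∈ Finset.univ.filter (fun j : Fin (min m n) => ρ ≤ (j : ℕ)), σ j ^ 2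
      ≤ ∑ j, σ j ^ 2 * (1 - t j) := hrearr
    _ ≤ ∑ j, ∑ i, Complex.normSq ((M.mulVec (v j) - N.mulVec (v j)) i) :=
        Finset.sum_le_sum fun j _ => st2 j
    _ ≤ frobNorm (M - N) ^ 2 := st1
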